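/- Let n = 2^k for some k ≥ 1. Then C_{U(n)}(n) = C_{\{1,−1\}}(n) = n; that is: (i) every sequence of length n in Z_n has a nonempty subsequence of consecutive terms which is a {1, −1}-weighted zero-sum sequence; and (ii) there exists a sequence of length n − 1 in Z_n having no nonempty subsequence of consecutive terms which is a U(n)-weighted zero-sum sequence. -/

import Mathlib

/-- A list `L` over `ZMod n` is an `A`-weighted zero-sum sequence if there are weights
`a₁, …, a_k ∈ A` (one per term) with `a₁x₁ + ⋯ + a_kx_k = 0`. -/
def IsWeightedZeroSum {n : ℕ} (A : Set (ZMod n)) (L : List (ZMod n)) : Prop :=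
  ∃ a : List (ZMod n), a.length = L.length ∧ (∀ w ∈ a, w ∈ A) ∧
    (List.zipWith (· * ·) a L).sum = 0

/-- `L` has a nonempty subsequence of consecutive terms which is an
`A`-weighted zero-sum sequence. -/
def HasConsecWZS {n : ℕ} (A : Set (ZMod n)) (L : List (ZMod n)) : Prop :=
  ∃ l₁ l₂ l₃ : List (ZMod n), L = l₁ ++ l₂ ++ l₃ ∧ l₂ ≠ [] ∧ IsWeightedZeroSum A l₂

/-- multiplying termwise by all-one weights gives back the list -/
lemma zipWith_one_mul {n : ℕ} (l : List (ZMod n)) :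
    List.zipWith (· * ·) (List.replicate l.length 1) l = l := by
  induction l with
  | nil => rfl
  | cons x xs ih => simp [List.replicate_succ, ih]

/-- between two distinct positive numbers with the same 2-adic valuation `M` lies a
number with strictly larger valuation -/
lemma exists_bigger_val (M t₁ t₂ : ℕ) (h1 : 0 < t₁) (h12 : t₁ < t₂)
    (hv1 : (Nat.factorization t₁) 2 = M) (hv2 : (Nat.factorization t₂) 2 = M) :
    ∃ u, t₁ < u ∧ u ≤ t₂ ∧ M < (Nat.factorization u) 2 := by
  have hd₁ : 2 ^ M ∣ t₁ := hv1 ▸ Nat.ordProj_dvd t₁ 2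
  have hd₂ : 2 ^ M ∣ t₂ := hv2 ▸ Nat.ordProj_dvd t₂ 2
  have hMpos : 0 < 2 ^ M := Nat.pow_pos (by norm_num)
  obtain ⟨c, hc⟩ := id hd₁
  have hcodd : Odd c := by
    rcases Nat.even_or_odd c with he | ho
    · exfalso
      obtain ⟨d, hd⟩ := he
      have hdd : 2 ^ (M + 1) ∣ t₁ := ⟨d, by rw [hc, hd]; ring⟩
      have := (Nat.Prime.pow_dvd_iff_le_factorization Nat.prime_two (by omega)).mp hdd
      omega
    · exact ho
  obtain ⟨d, hd⟩ := hcodd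
  refine ⟨t₁ + 2 ^ M, by omega, ?_, ?_⟩
  · have : 2 ^ M ∣ t₂ - t₁ := Nat.dvd_sub hd₂ hd₁
    have := Nat.le_of_dvd (by omega) this
    omega
  · have hdd : 2 ^ (M + 1) ∣ t₁ + 2 ^ M := ⟨d + 1, by rw [hc, hd]; ring⟩
    have := (Nat.Prime.pow_dvd_iff_le_factorization Nat.prime_two (by omega)).mp hdd
    omega

/-- Key number-theoretic lemma: a sum of odd multiples of `2^(k-1-v₂ t)` over an interval
`[s, s+m)` inside `[1, 2^k)` is never divisible by `2^k`. -/
lemma key_lemma (k s m : ℕ) (hk : 1 ≤ k) (hs : 1 ≤ s) (hm : 1 ≤ m) (hsm : s + m ≤ 2 ^ k)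
    (b : ℕ → ℕ) (hb : ∀ t ∈ Finset.Ico s (s + m), Odd (b t)) :
    ¬ (2 ^ k ∣ ∑ t ∈ Finset.Ico s (s + m), b t * 2 ^ (k - 1 - (Nat.factorization t) 2)) := by
  intro hdvd
  set T := Finset.Ico s (s + m) with hT
  have hTne : T.Nonempty := by
    rw [hT]
    exact ⟨s, by simp; omega⟩
  have hTpos : ∀ t ∈ T, 1 ≤ t ∧ t < 2 ^ k := by
    intro t ht
    rw [hT, Finset.mem_Ico] at ht
    omega
  -- maximal 2-adic valuation on T
  set v : ℕ → ℕ := fun t => (Nat.factorization t) 2 with hv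
  obtain ⟨t₀, ht₀T, ht₀max⟩ := T.exists_max_image v hTne
  set M := v t₀ with hM
  -- 2^M ∣ t for any t in T with v t = M, in particular t₀
  have hdvd_of_v : ∀ t ∈ T, 2 ^ M ∣ t → True := fun _ _ _ => trivial
  have ht₀pos : 1 ≤ t₀ ∧ t₀ < 2 ^ k := hTpos t₀ ht₀T
  have hpow_dvd : ∀ t ∈ T, v t = M → 2 ^ M ∣ t := by
    intro t ht hvt
    have : t ≠ 0 := by have := hTpos t ht; omega
    rw [← hvt]
    exact Nat.ordProj_dvd t 2
  have hMk : M < k := by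
    have h1 : 2 ^ M ∣ t₀ := hpow_dvd t₀ ht₀T rfl
    have h2 : 2 ^ M ≤ t₀ := Nat.le_of_dvd (by omega) h1
    have : 2 ^ M < 2 ^ k := lt_of_le_of_lt h2 ht₀pos.2
    exact (Nat.pow_lt_pow_iff_right (by norm_num)).mp this
  -- uniqueness of the maximum
  have huniq : ∀ t ∈ T, t ≠ t₀ → v t < M := by
    intro t ht htne
    rcases lt_or_eq_of_le (ht₀max t ht) with h | h
    · exact h
    · exfalso
      have key : ∀ t₁ t₂ : ℕ, t₁ ∈ T → t₂ ∈ T → t₁ < t₂ → v t₁ = M → v t₂ = M → False := by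
        intro t₁ t₂ h₁T h₂T h₁₂ hv₁ hv₂
        obtain ⟨u, hu1, hu2, hu3⟩ := exists_bigger_val M t₁ t₂ (hTpos t₁ h₁T).1 h₁₂ hv₁ hv₂
        have huT : u ∈ T := by
          rw [hT, Finset.mem_Ico]
          rw [hT, Finset.mem_Ico] at h₁T h₂T
          omega
        have h2 : v u ≤ M := ht₀max u huT
        simp only [hv] at h2
        omega
      rcases lt_or_gt_of_ne htne with h' | h'
      · exact key t t₀ ht ht₀T h' h rfl
      · exact key t₀ t ht₀T ht h' rfl h
  -- now split the sum
  set f : ℕ → ℕ := fun t => b t * 2 ^ (k - 1 - v t) with hf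
  have hsplit : ∑ t ∈ T, f t = f t₀ + ∑ t ∈ T.erase t₀, f t :=
    (Finset.add_sum_erase T f ht₀T).symm
  have hdvd_rest : 2 ^ (k - M) ∣ ∑ t ∈ T.erase t₀, f t := by
    apply Finset.dvd_sum
    intro t ht
    have htT := Finset.mem_of_mem_erase ht
    have htne := Finset.ne_of_mem_erase ht
    have hvt : v t < M := huniq t htT htne
    have : k - M ≤ k - 1 - v t := by omega
    exact Dvd.dvd.mul_left (pow_dvd_pow 2 this) _
  have hkM : 2 ^ (k - M) ∣ 2 ^ k := pow_dvd_pow 2 (by omega)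
  have hdvd' : 2 ^ (k - M) ∣ f t₀ := by
    have h1 : 2 ^ (k - M) ∣ ∑ t ∈ T, f t := dvd_trans hkM hdvd
    rw [hsplit] at h1
    exact (Nat.dvd_add_right hdvd_rest).mp (by rwa [add_comm] at h1)
  -- but f t₀ = b t₀ * 2^(k-1-M) with b t₀ odd, and k - M = (k-1-M) + 1
  obtain ⟨c, hc⟩ := hdvd'
  have hkM1 : k - M = (k - 1 - M) + 1 := by omega
  have hodd : Odd (b t₀) := hb t₀ ht₀T
  obtain ⟨d, hd⟩ := hodd
  rw [hf] at hc
  simp only at hc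
  rw [hkM1, hd, pow_succ] at hc
  have h2 : (2 * d + 1) * 2 ^ (k - 1 - M) = 2 ^ (k - 1 - M) * 2 * c := hc
  have : (2 * d + 1) = 2 * c := by
    have hp : 0 < 2 ^ (k - 1 - M) := Nat.pow_pos (by norm_num)
    apply Nat.eq_of_mul_eq_mul_right hp
    rw [h2]; ring
  omega

/-- The sum of `zipWith (· * ·)` of a natural list with a mapped range', as a Finset sum. -/
lemma zipWith_sum_eq {G : ℕ → ℕ} (aN : List ℕ) (s m : ℕ) (hlen : aN.length = m) :
    (List.zipWith (· * ·) aN (List.map G (List.range' s m))).sum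
      = ∑ i ∈ Finset.range m, aN.getD i 1 * G (s + i) := by
  have hz : List.zipWith (· * ·) aN (List.map G (List.range' s m))
      = List.ofFn (fun i : Fin m => aN.getD i 1 * G (s + i)) := by
    apply List.ext_getElem
    · simp [hlen]
    · intro i h1 h2
      have him : i < m := by simpa using h2
      simp only [List.getElem_zipWith, List.getElem_map, List.getElem_range'_1,
        List.getElem_ofFn]
      congr 1
      · rw [List.getD_eq_getElem aN 1 (by omega)]
  rw [hz, List.sum_ofFn]
  exact Fin.sum_univ_eq_sum_range (fun i => aN.getD i 1 * G (s + i)) m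

/-- For `n = 2^k`, `C_{U(n)}(n) = C_{{1,-1}}(n) = n`: every sequence of
length `n` in `Z_n` has a nonempty consecutive `{1,-1}`-weighted zero-sum subsequence,
and some sequence of length `n - 1` has no nonempty consecutive `U(n)`-weighted
zero-sum subsequence. -/
theorem C_units_two_power (k : ℕ) (hk : 1 ≤ k) :
    (∀ L : List (ZMod (2 ^ k)), L.length = 2 ^ k →
      HasConsecWZS ({1, -1} : Set (ZMod (2 ^ k))) L) ∧
    (∃ L : List (ZMod (2 ^ k)), L.length = 2 ^ k - 1 ∧
      ¬ HasConsecWZS {x : ZMod (2 ^ k) | IsUnit x} L) := by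
  set n := 2 ^ k with hn
  have hn2 : 2 ≤ n := by
    rw [hn]
    calc 2 = 2 ^ 1 := (pow_one 2).symm
    _ ≤ 2 ^ k := Nat.pow_le_pow_right (by norm_num) hk
  have hnpos : 0 < n := by omega
  have : NeZero n := ⟨by omega⟩
  constructor
  · -- part (i): pigeonhole on prefix sums; all weights 1
    intro L hL
    set f : Fin (n + 1) → ZMod n := fun i => (L.take i).sum with hf
    have hcard : Fintype.card (ZMod n) < Fintype.card (Fin (n + 1)) := by
      rw [ZMod.card n, Fintype.card_fin]
      omega
    obtain ⟨i, j, hij, hfij⟩ := Fintype.exists_ne_map_eq_of_card_lt f hcard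
    -- wlog i < j
    rcases lt_or_gt_of_ne hij with hlt | hgt
    case _ =>
      refine ⟨L.take i, (L.drop i).take (j - i), L.drop j, ?_, ?_, ?_⟩
      · have h1 : L.take (j : ℕ) = L.take i ++ (L.drop i).take ((j : ℕ) - i) := by
          rw [← List.take_add]
          congr 1
          omega
        rw [← h1, List.take_append_drop]
      · have hjn : (j : ℕ) ≤ n := Nat.lt_succ_iff.mp j.isLt
        have hlen : ((L.drop i).take ((j : ℕ) - i)).length = (j : ℕ) - i := by
          rw [List.length_take, List.length_drop, hL]
          omega
        intro hcon
        rw [hcon] at hlen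
        simp at hlen
        omega
      · refine ⟨List.replicate ((L.drop i).take ((j : ℕ) - i)).length 1, by simp, ?_, ?_⟩
        · intro w hw
          rw [List.eq_of_mem_replicate hw]
          left; rfl
        · rw [zipWith_one_mul]
          have h1 : L.take (j : ℕ) = L.take i ++ (L.drop i).take ((j : ℕ) - i) := by
            rw [← List.take_add]; congr 1; omega
          have h2 : (L.take (j : ℕ)).sum = (L.take (i : ℕ)).sum
              + ((L.drop i).take ((j : ℕ) - i)).sum := by rw [h1, List.sum_append]
          have h3 : f i = f j := hfij
          rw [hf] at h3
          simp only at h3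
          rw [h2] at h3
          exact (left_eq_add.mp h3)
    case _ =>
      refine ⟨L.take j, (L.drop j).take ((i : ℕ) - j), L.drop i, ?_, ?_, ?_⟩
      · have h1 : L.take (i : ℕ) = L.take j ++ (L.drop j).take ((i : ℕ) - j) := by
          rw [← List.take_add]
          congr 1
          omega
        rw [← h1, List.take_append_drop]
      · have hin : (i : ℕ) ≤ n := Nat.lt_succ_iff.mp i.isLt
        have hlen : ((L.drop j).take ((i : ℕ) - j)).length = (i : ℕ) - j := by
          rw [List.length_take, List.length_drop, hL]
          omega
        intro hcon
        rw [hcon] at hlen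
        simp at hlen
        omega
      · refine ⟨List.replicate ((L.drop j).take ((i : ℕ) - j)).length 1, by simp, ?_, ?_⟩
        · intro w hw
          rw [List.eq_of_mem_replicate hw]
          left; rfl
        · rw [zipWith_one_mul]
          have h1 : L.take (i : ℕ) = L.take j ++ (L.drop j).take ((i : ℕ) - j) := by
            rw [← List.take_add]; congr 1; omega
          have h2 : (L.take (i : ℕ)).sum = (L.take (j : ℕ)).sum
              + ((L.drop j).take ((i : ℕ) - j)).sum := by rw [h1, List.sum_append]
          have h3 : f i = f j := hfij
          rw [hf] at h3
          simp only at h3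
          have h4 := h3.symm.trans h2
          exact (left_eq_add.mp h4)
  · -- part (ii): the "reverse ruler" sequence
    set G : ℕ → ℕ := fun t => 2 ^ (k - 1 - (Nat.factorization t) 2) with hG
    set N := n - 1 with hN
    refine ⟨List.map (fun t => ((G t : ℕ) : ZMod n)) (List.range' 1 N), by simp, ?_⟩
    rintro ⟨l₁, l₂, l₃, hdecomp, hne, a, halen, haunit, hasum⟩
    set i := l₁.length with hi
    set m := l₂.length with hm
    have hmpos : 1 ≤ m := by
      rw [hm]
      cases l₂ with
      | nil => exact absurd rfl hne
      | cons _ _ => simp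
    have hlensum : i + m + l₃.length = N := by
      have := congrArg List.length hdecomp
      simp at this
      omega
    -- split the range'
    have hrange : List.range' 1 N
        = List.range' 1 i ++ List.range' (1 + i) m ++ List.range' (1 + i + m) (N - i - m) := by
      have e1 : List.range' (1 + i) m ++ List.range' (1 + i + m) (N - i - m)
          = List.range' (1 + i) (N - i) := by
        rw [List.range'_append_1 (s := 1 + i) (m := m) (n := N - i - m)]
        congr 1
        omega
      have e2 : List.range' 1 i ++ List.range' (1 + i) (N - i) = List.range' 1 N := by
        rw [List.range'_append_1 (s := 1) (m := i) (n := N - i)]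
        congr 1
        omega
      rw [List.append_assoc, e1, e2]
    have hLdecomp : List.map (fun t => ((G t : ℕ) : ZMod n)) (List.range' 1 N)
        = (List.map (fun t => ((G t : ℕ) : ZMod n)) (List.range' 1 i))
          ++ (List.map (fun t => ((G t : ℕ) : ZMod n)) (List.range' (1 + i) m))
          ++ (List.map (fun t => ((G t : ℕ) : ZMod n)) (List.range' (1 + i + m) (N - i - m))) := by
      rw [hrange, List.map_append, List.map_append]
    rw [hLdecomp] at hdecomp
    -- identify l₂
    have h12 : l₁ = List.map (fun t => ((G t : ℕ) : ZMod n)) (List.range' 1 i)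
        ∧ l₂ ++ l₃ = (List.map (fun t => ((G t : ℕ) : ZMod n)) (List.range' (1 + i) m))
          ++ (List.map (fun t => ((G t : ℕ) : ZMod n)) (List.range' (1 + i + m) (N - i - m))) := by
      have := hdecomp
      rw [List.append_assoc, List.append_assoc] at this
      exact List.append_inj this.symm (by simp [hi])
    have hl₂ : l₂ = List.map (fun t => ((G t : ℕ) : ZMod n)) (List.range' (1 + i) m) :=
      (List.append_inj h12.2 (by simp [hm])).1
    -- weights: integer versions
    set aN : List ℕ := a.map ZMod.val with haN
    have haNlen : aN.length = m := by rw [haN, List.length_map, halen]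
    -- oddness of weights
    have haNodd : ∀ j : ℕ, j < m → Odd (aN.getD j 1) := by
      intro j hj
      have hja : j < a.length := by omega
      rw [haN, List.getD_eq_getElem _ 1 (by simpa using hja), List.getElem_map]
      have hu : IsUnit a[j] := haunit _ (List.getElem_mem hja)
      have hcop : Nat.Coprime (a[j].val) n := by
        have := (ZMod.isUnit_iff_coprime (a[j].val) n).mpr
        have h2 : ((a[j].val : ℕ) : ZMod n) = a[j] := ZMod.natCast_zmod_val a[j]
        rw [← ZMod.isUnit_iff_coprime, h2]
        exact hu
      rw [Nat.odd_iff]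
      by_contra h2
      have h2' : 2 ∣ a[j].val := by omega
      have h2n : 2 ∣ n := by
        rw [hn]
        exact dvd_pow_self 2 (by omega)
      have := Nat.dvd_gcd h2' h2n
      rw [Nat.Coprime] at hcop
      rw [hcop] at this
      omega
    -- the sum over ℕ
    have hcast : List.zipWith (· * ·) a l₂
        = List.map (fun x : ℕ => (x : ZMod n))
            (List.zipWith (· * ·) aN (List.map G (List.range' (1 + i) m))) := by
      apply List.ext_getElem
      · simp [hl₂, haNlen, halen]
      · intro j h1 h2
        have hjm : j < m := by
          simp [haNlen] at h2
          omega
        simp only [List.getElem_zipWith, List.getElem_map, hl₂, List.getElem_range'_1,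
          haN]
        push_cast
        rw [ZMod.natCast_zmod_val]
    have hsumN : ((List.zipWith (· * ·) aN (List.map G (List.range' (1 + i) m))).sum : ZMod n)
        = 0 := by
      rw [Nat.cast_list_sum, ← hcast, hasum]
    have hdvdN : n ∣ (List.zipWith (· * ·) aN (List.map G (List.range' (1 + i) m))).sum :=
      (ZMod.natCast_eq_zero_iff _ n).mp hsumN
    rw [zipWith_sum_eq aN (1 + i) m haNlen] at hdvdN
    -- convert to Ico sum and apply the key lemma
    set s := 1 + i with hs
    have hIco : ∑ t ∈ Finset.Ico s (s + m), aN.getD (t - s) 1 * G t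
        = ∑ j ∈ Finset.range m, aN.getD j 1 * G (s + j) := by
      rw [Finset.sum_Ico_eq_sum_range]
      apply Finset.sum_congr (by congr 1; omega)
      intro j hj
      congr 2
      omega
    have hdvd2 : 2 ^ k ∣ ∑ t ∈ Finset.Ico s (s + m), aN.getD (t - s) 1 * G t := by
      rw [hIco]
      exact hdvdN
    refine key_lemma k s m hk (by omega) hmpos ?_ (fun t => aN.getD (t - s) 1) ?_ hdvd2
    · omega
    · intro t ht
      rw [Finset.mem_Ico] at ht
      exact haNodd (t - s) (by omega)
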